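/- Let 𝒜 = {A₁,…,A_m} be a finite set of invertible real d×d matrices, let ρ > 0, and let ‖·‖ be a norm on ℝ^d satisfying max_{1≤i≤m} ‖Aᵢᵀ x‖ = ρ‖x‖ for all x ∈ ℝ^d (a Barabanov norm for the transposed family). Let S = {x : ‖x‖ ≤ 1} be its unit ball and M = S° its polar. Then M is a centrally symmetric convex body satisfying ρM = conv(⋃_{i=1}^m A_i M). -/

import Mathlib

open Matrix Filter Topology Pointwise

/-- Operator norm of a matrix, viewed as a linear operator on `ℝ^d`. -/
noncomputable def matOpNorm {d : ℕ} (B : Matrix (Fin d) (Fin d) ℝ) : ℝ :=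
  ‖LinearMap.toContinuousLinearMap (Matrix.toLin' B)‖

/-- Product `A_{σ_n} ⋯ A_{σ_2} A_{σ_1}` of matrices along an index word `σ`. -/
noncomputable def wordProd {d m n : ℕ} (A : Fin m → Matrix (Fin d) (Fin d) ℝ)
    (σ : Fin n → Fin m) : Matrix (Fin d) (Fin d) ℝ :=
  (List.ofFn (fun k => A (σ k))).prod

/-- The joint spectral radius `ρ(𝒜) = lim_n max_σ ‖A_{σ_n}⋯A_{σ_1}‖^{1/n}`
(stated via `limsup`, which coincides with the limit). -/
noncomputable def jsr {d m : ℕ} (A : Fin m → Matrix (Fin d) (Fin d) ℝ) : ℝ :=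
  Filter.limsup
    (fun n : ℕ => ⨆ σ : Fin n → Fin m, matOpNorm (wordProd A σ) ^ (1 / (n : ℝ))) atTop

/-- `N` is a norm on `ℝ^d`. -/
def IsMatNorm {d : ℕ} (N : (Fin d → ℝ) → ℝ) : Prop :=
  (∀ x, 0 ≤ N x) ∧ (∀ x, N x = 0 → x = 0) ∧
    (∀ (c : ℝ) (x), N (c • x) = |c| * N x) ∧ (∀ x y, N (x + y) ≤ N x + N y)

/-- The family `A` has no common invariant subspace other than `{0}` and `ℝ^d`. -/
def MatSetIrreducible {d m : ℕ} (A : Fin m → Matrix (Fin d) (Fin d) ℝ) : Prop :=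
  ∀ V : Submodule ℝ (Fin d → ℝ), (∀ i, V.map (Matrix.toLin' (A i)) ≤ V) → V = ⊥ ∨ V = ⊤

/-- The polar `X° = {y : |⟨x,y⟩| ≤ 1 ∀ x ∈ X}` of a set `X ⊆ ℝ^d`. -/
def polarSet {d : ℕ} (X : Set (Fin d → ℝ)) : Set (Fin d → ℝ) :=
  {y | ∀ x ∈ X, |∑ j, x j * y j| ≤ 1}

/-- An averaging function: continuous on positive arguments, `γ(t,t) = t`, and
`min{t,s} < γ(t,s) < max{t,s}` for `t ≠ s`. -/
def IsAveraging (γ : ℝ → ℝ → ℝ) : Prop :=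
  ContinuousOn (fun p : ℝ × ℝ => γ p.1 p.2) {p | 0 < p.1 ∧ 0 < p.2} ∧
    (∀ t, 0 < t → γ t t = t) ∧
    (∀ t s, 0 < t → 0 < s → t ≠ s → min t s < γ t s ∧ γ t s < max t s)

/-- `r_k(𝒜,x) = max_{σ ∈ {1,…,m}^k} ‖A_{σ_k}⋯A_{σ_1} x‖`. -/
noncomputable def rsem {d m : ℕ} (A : Fin m → Matrix (Fin d) (Fin d) ℝ)
    (N : (Fin d → ℝ) → ℝ) (k : ℕ) (x : Fin d → ℝ) : ℝ :=
  ⨆ σ : Fin k → Fin m, N (wordProd A σ *ᵥ x)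

/-- `‖x‖_n = max{‖x‖, κ⁻¹ r₁(𝒜,x), …, κ^{-(n-1)} r_{n-1}(𝒜,x)}`. -/
noncomputable def relaxNorm {d m : ℕ} (A : Fin m → Matrix (Fin d) (Fin d) ℝ)
    (N : (Fin d → ℝ) → ℝ) (κ : ℝ) (n : ℕ) (x : Fin d → ℝ) : ℝ :=
  max (N x) (⨆ k ∈ Finset.Ico 1 n, (1 / κ ^ k) * rsem A N k x)

/-- The operator norm of a matrix induced by the vector norm `N`. -/
noncomputable def inducedOpNorm {d : ℕ} (N : (Fin d → ℝ) → ℝ)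
    (B : Matrix (Fin d) (Fin d) ℝ) : ℝ :=
  ⨆ x : {x : Fin d → ℝ // x ≠ 0}, N (B *ᵥ (x : Fin d → ℝ)) / N (x : Fin d → ℝ)

/-- The spectral radius of a matrix: the maximum absolute value of its eigenvalues. -/
noncomputable def specRad {d : ℕ} (B : Matrix (Fin d) (Fin d) ℝ) : ℝ :=
  sSup (abs '' spectrum ℝ B)

/-- The Euclidean norm on `ℝ^d`. -/
noncomputable def euclNorm {d : ℕ} (x : Fin d → ℝ) : ℝ :=
  Real.sqrt (∑ j, x j ^ 2)

private lemma myIsCompact_convexJoin {E : Type*} [AddCommGroup E] [Module ℝ E]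
    [TopologicalSpace E] [IsTopologicalAddGroup E] [ContinuousSMul ℝ E] [T2Space E]
    {s t : Set E} (hs : IsCompact s) (ht : IsCompact t) :
    IsCompact (convexJoin ℝ s t) := by
  have h : convexJoin ℝ s t =
      (fun p : ℝ × E × E => (1 - p.1) • p.2.1 + p.1 • p.2.2) ''
        (Set.Icc (0:ℝ) 1 ×ˢ s ×ˢ t) := by
    ext z
    simp only [convexJoin, Set.mem_iUnion, Set.mem_image, Set.mem_prod]
    constructor
    · rintro ⟨x, hx, y, hy, hz⟩
      rw [segment_eq_image ℝ x y] at hz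
      obtain ⟨θ, hθ, rfl⟩ := hz
      exact ⟨(θ, x, y), ⟨hθ, hx, hy⟩, rfl⟩
    · rintro ⟨⟨θ, x, y⟩, ⟨hθ, hx, hy⟩, rfl⟩
      refine ⟨x, hx, y, hy, ?_⟩
      rw [segment_eq_image ℝ x y]
      exact ⟨θ, hθ, rfl⟩
  rw [h]
  exact ((isCompact_Icc.prod (hs.prod ht))).image (by fun_prop)

private lemma myIsCompact_convexHull_union {E : Type*} [AddCommGroup E] [Module ℝ E]
    [TopologicalSpace E] [IsTopologicalAddGroup E] [ContinuousSMul ℝ E] [T2Space E]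
    {s t : Set E} (hs : IsCompact (convexHull ℝ s)) (ht : IsCompact (convexHull ℝ t)) :
    IsCompact (convexHull ℝ (s ∪ t)) := by
  rcases s.eq_empty_or_nonempty with rfl | hs0
  · simpa using ht
  rcases t.eq_empty_or_nonempty with rfl | ht0
  · simpa using hs
  rw [convexHull_union hs0 ht0]
  exact myIsCompact_convexJoin hs ht

private lemma myIsCompact_convexHull_iUnion {E : Type*} [AddCommGroup E] [Module ℝ E]
    [TopologicalSpace E] [IsTopologicalAddGroup E] [ContinuousSMul ℝ E] [T2Space E]
    {m : ℕ} (K : Fin m → Set E) (h : ∀ i, IsCompact (convexHull ℝ (K i))) :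
    IsCompact (convexHull ℝ (⋃ i, K i)) := by
  induction m with
  | zero => simp [Set.iUnion_of_empty]
  | succ n ih =>
    have he : (⋃ i : Fin (n+1), K i) = (⋃ i : Fin n, K i.castSucc) ∪ K (Fin.last n) := by
      ext x
      simp only [Set.mem_iUnion, Set.mem_union]
      constructor
      · rintro ⟨i, hi⟩
        rcases Fin.eq_castSucc_or_eq_last i with ⟨j, rfl⟩ | rfl
        · exact Or.inl ⟨j, hi⟩
        · exact Or.inr hi
      · rintro (⟨j, hj⟩ | hl)
        · exact ⟨j.castSucc, hj⟩
        · exact ⟨Fin.last n, hl⟩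
    rw [he]
    exact myIsCompact_convexHull_union (ih _ (fun i => h i.castSucc)) (h (Fin.last n))

/-- dual achievement: there is `w` with `⟨x,w⟩ ≤ N x` for all `x` and `⟨v,w⟩ = N v`. -/
private lemma myExists_dual_vec {d : ℕ} (N : (Fin d → ℝ) → ℝ)
    (hN0 : ∀ x, 0 ≤ N x) (hNsmul : ∀ (c : ℝ) x, N (c • x) = |c| * N x)
    (hNadd : ∀ x y, N (x + y) ≤ N x + N y) (v : Fin d → ℝ) :
    ∃ w : Fin d → ℝ, (∀ x, |∑ j, x j * w j| ≤ N x) ∧ ∑ j, v j * w j = N v := by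
  have hN00 : N 0 = 0 := by simpa using hNsmul 0 0
  by_cases hv : v = 0
  · refine ⟨0, fun x => by simpa using hN0 x, by simp [hv, hN00]⟩
  · -- Hahn-Banach extension of c • v ↦ c * N v
    set f : (Fin d → ℝ) →ₗ.[ℝ] ℝ := LinearPMap.mkSpanSingleton v (N v) hv with hf
    have hfle : ∀ x : f.domain, f x ≤ N (x : Fin d → ℝ) := by
      rintro ⟨x, hx⟩
      obtain ⟨c, rfl⟩ := Submodule.mem_span_singleton.1 hx
      have h1 : f ⟨c • v, hx⟩ = c • N v := LinearPMap.mkSpanSingleton'_apply _ _ _ c hx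
      rw [h1, hNsmul c v]
      have := le_abs_self c
      have := hN0 v
      have h3 : c * N v ≤ |c| * N v := mul_le_mul_of_nonneg_right (le_abs_self c) (hN0 v)
      simpa [smul_eq_mul] using h3
    obtain ⟨g, hg1, hg2⟩ := exists_extension_of_le_sublinear f N
      (fun c hc x => by rw [hNsmul, abs_of_pos hc]) hNadd hfle
    have hgabs : ∀ x, |g x| ≤ N x := by
      intro x
      rcases abs_cases (g x) with ⟨h, _⟩ | ⟨h, _⟩
      · rw [h]; exact hg2 x
      · rw [h]
        have := hg2 (-x)
        rw [map_neg] at this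
        have h2 : N (-x) = N x := by simpa using hNsmul (-1) x
        linarith
    refine ⟨fun i => g (fun j => if i = j then 1 else 0), fun x => ?_, ?_⟩
    · have hx : g x = ∑ j, x j * g (fun k => if j = k then 1 else 0) := by
        conv_lhs => rw [pi_eq_sum_univ x]
        rw [map_sum]
        exact Finset.sum_congr rfl fun j _ => by rw [LinearMap.map_smul]; rfl
      rw [← hx]; exact hgabs x
    · have hx : g v = ∑ j, v j * g (fun k => if j = k then 1 else 0) := by
        conv_lhs => rw [pi_eq_sum_univ v]
        rw [map_sum]
        exact Finset.sum_congr rfl fun j _ => by rw [LinearMap.map_smul]; rfl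
      rw [← hx]
      have hmem : v ∈ f.domain := Submodule.mem_span_singleton_self v
      have := hg1 ⟨v, hmem⟩
      rw [this]
      exact LinearPMap.mkSpanSingleton_apply ℝ ℝ hv (N v)

/-- if `‖·‖` is a Barabanov norm for the transposed family, then the polar
`M = S°` of its unit ball is a centrally symmetric convex body with
`ρM = conv(⋃ᵢ AᵢM)`. -/
theorem stmt6 {d m : ℕ} (hm : 0 < m)
    (A : Fin m → Matrix (Fin d) (Fin d) ℝ) (hinv : ∀ i, IsUnit (A i))
    (N : (Fin d → ℝ) → ℝ) (hN : IsMatNorm N)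
    (ρ : ℝ) (hρ : 0 < ρ)
    (hbar : ∀ x, (⨆ i, N ((A i)ᵀ *ᵥ x)) = ρ * N x)
    (S : Set (Fin d → ℝ)) (hS : S = {x | N x ≤ 1})
    (M : Set (Fin d → ℝ)) (hM : M = polarSet S) :
    Convex ℝ M ∧ IsCompact M ∧ (interior M).Nonempty ∧ -M = M ∧
      ρ • M = convexHull ℝ (⋃ i, (fun x => A i *ᵥ x) '' M) := by
  obtain ⟨hN0, hNdef, hNsmul, hNadd⟩ := hN
  have hN00 : N 0 = 0 := by simpa using hNsmul 0 0
  have hNneg : ∀ x, N (-x) = N x := fun x => by simpa using hNsmul (-1) x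
  subst hS hM
  set M := polarSet {x | N x ≤ 1} with hMdef
  have hmemM : ∀ y, y ∈ M ↔ ∀ x, N x ≤ 1 → |∑ j, x j * y j| ≤ 1 := fun y => Iff.rfl
  have hM0 : (0 : Fin d → ℝ) ∈ M := by intro x hx; simp
  -- support function of M equals N
  have hdual_le : ∀ w ∈ M, ∀ v, ∑ j, v j * w j ≤ N v := by
    intro w hw v
    rcases eq_or_lt_of_le (hN0 v) with h0 | hpos
    · have hv0 : v = 0 := hNdef v h0.symm
      simp [hv0, hN00]
    · have h1 : N ((N v)⁻¹ • v) ≤ 1 := by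
        rw [hNsmul, abs_of_pos (inv_pos.2 hpos), inv_mul_cancel₀ hpos.ne']
      have h2 := hw _ h1
      have h3 : ∑ j, ((N v)⁻¹ • v) j * w j = (N v)⁻¹ * ∑ j, v j * w j := by
        simp [Finset.mul_sum, mul_assoc]
      rw [h3] at h2
      have h4 := (abs_le.1 h2).2
      calc ∑ j, v j * w j = N v * ((N v)⁻¹ * ∑ j, v j * w j) := by field_simp
        _ ≤ N v * 1 := mul_le_mul_of_nonneg_left h4 hpos.le
        _ = N v := mul_one _
  have hdual_abs : ∀ w ∈ M, ∀ v, |∑ j, v j * w j| ≤ N v := by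
    intro w hw v
    rcases abs_cases (∑ j, v j * w j) with ⟨h, _⟩ | ⟨h, _⟩
    · rw [h]; exact hdual_le w hw v
    · rw [h]
      have h1 := hdual_le w hw (-v)
      have h2 : ∑ j, (-v) j * w j = -∑ j, v j * w j := by
        rw [← Finset.sum_neg_distrib]
        exact Finset.sum_congr rfl fun j _ => by simp
      rw [h2, hNneg] at h1
      linarith
  have hach : ∀ v, ∃ w ∈ M, ∑ j, v j * w j = N v := by
    intro v
    obtain ⟨w, hw1, hw2⟩ := myExists_dual_vec N hN0 hNsmul hNadd v
    exact ⟨w, fun x hx => (hw1 x).trans hx, hw2⟩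
  -- Barabanov facts
  haveI : Nonempty (Fin m) := ⟨⟨0, hm⟩⟩
  have hub : ∀ x i, N ((A i)ᵀ *ᵥ x) ≤ ρ * N x := by
    intro x i
    rw [← hbar x]
    exact le_ciSup (f := fun i => N ((A i)ᵀ *ᵥ x)) (Set.Finite.bddAbove (Set.finite_range _)) i
  have hmax : ∀ x, ∃ i, N ((A i)ᵀ *ᵥ x) = ρ * N x := by
    intro x
    obtain ⟨i, hi⟩ := Finite.exists_max (fun i => N ((A i)ᵀ *ᵥ x))
    refine ⟨i, le_antisymm (hub x i) ?_⟩
    rw [← hbar x]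
    exact ciSup_le hi
  have hswap : ∀ (B : Matrix (Fin d) (Fin d) ℝ) (x y : Fin d → ℝ),
      ∑ j, x j * (B *ᵥ y) j = ∑ j, (Bᵀ *ᵥ x) j * y j := by
    intro B x y
    have h1 : x ⬝ᵥ (B *ᵥ y) = (Bᵀ *ᵥ x) ⬝ᵥ y := by
      rw [Matrix.dotProduct_mulVec]
      congr 1
      rw [← Matrix.transpose_transpose B, Matrix.vecMul_transpose, Matrix.transpose_transpose]
    simpa [dotProduct] using h1
  -- convexity
  have hconv : Convex ℝ M := by
    intro y1 hy1 y2 hy2 a b ha hb hab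
    intro x hx
    have he : ∑ j, x j * (a • y1 + b • y2) j
        = a * (∑ j, x j * y1 j) + b * (∑ j, x j * y2 j) := by
      rw [Finset.mul_sum, Finset.mul_sum, ← Finset.sum_add_distrib]
      refine Finset.sum_congr rfl fun j _ => ?_
      simp only [Pi.add_apply, Pi.smul_apply, smul_eq_mul]
      ring
    rw [he]
    calc |a * (∑ j, x j * y1 j) + b * (∑ j, x j * y2 j)|
        ≤ |a * (∑ j, x j * y1 j)| + |b * (∑ j, x j * y2 j)| := abs_add_le _ _
      _ = a * |∑ j, x j * y1 j| + b * |∑ j, x j * y2 j| := by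
          rw [abs_mul, abs_mul, abs_of_nonneg ha, abs_of_nonneg hb]
      _ ≤ a * 1 + b * 1 := add_le_add
          (mul_le_mul_of_nonneg_left (hy1 x hx) ha)
          (mul_le_mul_of_nonneg_left (hy2 x hx) hb)
      _ = 1 := by linarith
  -- closedness
  have hclosed : IsClosed M := by
    have h : M = ⋂ x ∈ {x : Fin d → ℝ | N x ≤ 1}, {y | |∑ j, x j * y j| ≤ 1} := by
      ext y
      simp only [Set.mem_iInter, Set.mem_setOf_eq]
      exact Iff.rfl
    rw [h]
    refine isClosed_biInter fun x hx => ?_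
    have hc : Continuous fun y : Fin d → ℝ => |∑ j, x j * y j| := by fun_prop
    exact isClosed_le hc continuous_const
  -- unit vectors
  have hej : ∀ j : Fin d, 0 < N (fun k => if j = k then (1:ℝ) else 0) := by
    intro j
    rcases eq_or_lt_of_le (hN0 (fun k => if j = k then (1:ℝ) else 0)) with h0 | h
    · exfalso
      have h1 := hNdef _ h0.symm
      have h2 := congrFun h1 j
      simp at h2
    · exact h
  have hcoord : ∀ y ∈ M, ∀ j, |y j| ≤ N (fun k => if j = k then (1:ℝ) else 0) := by
    intro y hy j
    set e : Fin d → ℝ := fun k => if j = k then (1:ℝ) else 0 with hedef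
    have h1 : N ((N e)⁻¹ • e) ≤ 1 := by
      rw [hNsmul, abs_of_pos (inv_pos.2 (hej j)), inv_mul_cancel₀ (hej j).ne']
    have h2 := hy _ h1
    have h3 : ∑ k, ((N e)⁻¹ • e) k * y k = (N e)⁻¹ * y j := by
      simp [hedef, ite_mul, Finset.mul_sum]
    rw [h3, abs_mul, abs_of_pos (inv_pos.2 (hej j))] at h2
    have h4 := mul_le_mul_of_nonneg_left h2 (hej j).le
    rw [mul_one] at h4
    calc |y j| = N e * ((N e)⁻¹ * |y j|) := by
          rw [← mul_assoc, mul_inv_cancel₀ (hej j).ne', one_mul]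
      _ ≤ N e := h4
  -- compactness
  have hcompact : IsCompact M := by
    refine IsCompact.of_isClosed_subset
      (isCompact_univ_pi fun j => isCompact_Icc
        (a := -(N (fun k => if j = k then (1:ℝ) else 0)))
        (b := N (fun k => if j = k then (1:ℝ) else 0))) hclosed ?_
    intro y hy
    intro j _
    have := hcoord y hy j
    rw [abs_le] at this
    exact ⟨this.1, this.2⟩
  -- symmetry
  have hsymm0 : ∀ y ∈ M, -y ∈ M := by
    intro y hy x hx
    have h := hy x hx
    have h2 : ∑ j, x j * (-y) j = -∑ j, x j * y j := by
      rw [← Finset.sum_neg_distrib]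
      exact Finset.sum_congr rfl fun j _ => by simp
    rw [h2, abs_neg]
    exact h
  have hsymm : -M = M := by
    ext y
    rw [Set.mem_neg]
    exact ⟨fun h => by simpa using hsymm0 _ h, fun h => hsymm0 y h⟩
  -- interior nonempty
  have hint : (interior M).Nonempty := by
    rcases Nat.eq_zero_or_pos d with hd | hd
    · have h : M = Set.univ := by
        ext y
        simp only [Set.mem_univ, iff_true]
        intro x hx
        subst hd
        simp
      rw [h, interior_univ]
      exact ⟨0, trivial⟩
    · have hNle : ∀ z : Fin d → ℝ,
          N z ≤ ∑ j, |z j| * N (fun k => if j = k then (1:ℝ) else 0) := by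
        intro z
        conv_lhs => rw [pi_eq_sum_univ z]
        refine le_trans (Finset.le_sum_of_subadditive N hN00.le hNadd _ _) ?_
        exact Finset.sum_le_sum fun j _ => le_of_eq (hNsmul _ _)
      set C : ℝ := ∑ j, N (fun k => if j = k then (1:ℝ) else 0) with hC
      have hCpos : 0 < C := Finset.sum_pos (fun j _ => hej j) ⟨⟨0, hd⟩, Finset.mem_univ _⟩
      have hNcont : Continuous N := by
        have hlip : LipschitzWith (Real.toNNReal C) N := by
          refine LipschitzWith.of_dist_le_mul fun x y => ?_
          have hdiff : ∀ a b : Fin d → ℝ, N (a - b) ≤ C * dist a b := by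
            intro a b
            refine le_trans (hNle (a - b)) ?_
            calc ∑ j, |(a - b) j| * N (fun k => if j = k then (1:ℝ) else 0)
                ≤ ∑ j, dist a b * N (fun k => if j = k then (1:ℝ) else 0) := by
                  refine Finset.sum_le_sum fun j _ => ?_
                  refine mul_le_mul_of_nonneg_right ?_ (hN0 _)
                  have := dist_le_pi_dist a b j
                  simpa [Real.dist_eq] using this
              _ = C * dist a b := by rw [← Finset.mul_sum, ← hC, mul_comm]
          have h1 : N x - N y ≤ N (x - y) := by
            have := hNadd (x - y) y
            simp only [sub_add_cancel] at this
            linarith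
          have h2 : N y - N x ≤ N (x - y) := by
            have h3 := hNadd (y - x) x
            simp only [sub_add_cancel] at h3
            have h4 : N (y - x) = N (x - y) := by
              rw [← hNneg (x - y)]; congr 1; abel
            linarith
          rw [Real.dist_eq, Real.coe_toNNReal C hCpos.le]
          rw [abs_sub_le_iff]
          exact ⟨h1.trans (hdiff x y), h2.trans (hdiff x y)⟩
        exact hlip.continuous
      haveI : Nontrivial (Fin d → ℝ) := by
        refine ⟨(fun k => if (⟨0, hd⟩ : Fin d) = k then (1:ℝ) else 0), 0, fun h => ?_⟩
        have := congrFun h ⟨0, hd⟩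
        simp at this
      obtain ⟨x₀, hx₀s, hx₀min⟩ := (isCompact_sphere (0 : Fin d → ℝ) 1).exists_isMinOn
        (NormedSpace.sphere_nonempty.2 zero_le_one) hNcont.continuousOn
      have hx₀n : ‖x₀‖ = 1 := by simpa using hx₀s
      have hεpos : 0 < N x₀ := by
        rcases eq_or_lt_of_le (hN0 x₀) with h0 | h
        · exfalso
          have h1 := hNdef x₀ h0.symm
          rw [h1] at hx₀n
          simp at hx₀n
        · exact h
      set ε : ℝ := N x₀ with hε
      have hlow : ∀ x : Fin d → ℝ, N x ≤ 1 → ‖x‖ ≤ ε⁻¹ := by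
        intro x hx
        rcases eq_or_ne x 0 with rfl | hx0
        · simp; positivity
        · have hxn : 0 < ‖x‖ := norm_pos_iff.2 hx0
          have h1 : (‖x‖⁻¹ • x) ∈ Metric.sphere (0 : Fin d → ℝ) 1 := by
            simp [norm_smul, abs_of_pos (inv_pos.2 hxn), inv_mul_cancel₀ hxn.ne']
          have h2 : ε ≤ N (‖x‖⁻¹ • x) := hx₀min h1
          rw [hNsmul, abs_of_pos (inv_pos.2 hxn)] at h2
          have h3 : ε * ‖x‖ ≤ N x := by
            have := mul_le_mul_of_nonneg_left h2 hxn.le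
            calc ε * ‖x‖ = ‖x‖ * ε := mul_comm _ _
              _ ≤ ‖x‖ * (‖x‖⁻¹ * N x) := mul_le_mul_of_nonneg_left h2 hxn.le
              _ = N x := by field_simp
          have h4 : ε * ‖x‖ ≤ 1 := h3.trans hx
          calc ‖x‖ = ε⁻¹ * (ε * ‖x‖) := by field_simp
            _ ≤ ε⁻¹ * 1 := mul_le_mul_of_nonneg_left h4 (inv_pos.2 hεpos).le
            _ = ε⁻¹ := mul_one _
      set r : ℝ := ε / (2 * d) with hr
      have hrpos : 0 < r := by
        have : (0:ℝ) < d := by exact_mod_cast hd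
        positivity
      have hball : Metric.ball (0 : Fin d → ℝ) r ⊆ M := by
        intro y hy x hx
        have hyn : ‖y‖ < r := by simpa using hy
        have h1 : |∑ j, x j * y j| ≤ ∑ j : Fin d, ‖x‖ * ‖y‖ := by
          refine le_trans (Finset.abs_sum_le_sum_abs _ _) ?_
          refine Finset.sum_le_sum fun j _ => ?_
          rw [abs_mul]
          exact mul_le_mul (norm_le_pi_norm x j) (norm_le_pi_norm y j)
            (abs_nonneg _) (norm_nonneg _)
        have h2 : (∑ _j : Fin d, ‖x‖ * ‖y‖) = d * (‖x‖ * ‖y‖) := by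
          rw [Finset.sum_const, Finset.card_univ, Fintype.card_fin, nsmul_eq_mul]
        have hxb := hlow x hx
        have hd0 : (0:ℝ) < d := by exact_mod_cast hd
        have h3 : (d : ℝ) * (‖x‖ * ‖y‖) ≤ d * (ε⁻¹ * r) := by
          refine mul_le_mul_of_nonneg_left ?_ hd0.le
          exact mul_le_mul hxb hyn.le (norm_nonneg _) (by positivity)
        have h4 : (d : ℝ) * (ε⁻¹ * r) = 1/2 := by
          rw [hr]
          field_simp
        rw [h2] at h1
        linarith
      exact ⟨0, interior_maximal hball Metric.isOpen_ball (Metric.mem_ball_self hrpos)⟩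
  refine ⟨hconv, hcompact, hint, hsymm, ?_⟩
  -- main equality
  have hKcompact : ∀ i, IsCompact ((fun x => A i *ᵥ x) '' M) := by
    intro i
    have hc : Continuous fun x : Fin d → ℝ => A i *ᵥ x := by
      refine continuous_pi fun j => ?_
      simp only [Matrix.mulVec, dotProduct]
      fun_prop
    exact hcompact.image hc
  have hKconv : ∀ i, Convex ℝ ((fun x => A i *ᵥ x) '' M) := by
    intro i
    have h := hconv.linear_image (Matrix.mulVecLin (A i))
    exact h
  have hCcompact : IsCompact (convexHull ℝ (⋃ i, (fun x => A i *ᵥ x) '' M)) := by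
    refine myIsCompact_convexHull_iUnion _ fun i => ?_
    rw [(hKconv i).convexHull_eq]
    exact hKcompact i
  apply Set.Subset.antisymm
  · -- ρ • M ⊆ conv hull
    intro z hz
    obtain ⟨y₀, hy₀, rfl⟩ := Set.mem_smul_set.1 hz
    by_contra hzC
    obtain ⟨f, u, hfC, hfz⟩ := geometric_hahn_banach_closed_point
      (convex_convexHull ℝ _) hCcompact.isClosed hzC
    set xf : Fin d → ℝ := fun j => f (fun k => if j = k then (1:ℝ) else 0) with hxf
    have hf_eq : ∀ y, f y = ∑ j, y j * xf j := by
      intro y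
      conv_lhs => rw [pi_eq_sum_univ y]
      rw [map_sum]
      exact Finset.sum_congr rfl fun j _ => by rw [ContinuousLinearMap.map_smul]; rfl
    have h1 : f (ρ • y₀) = ρ * f y₀ := by rw [ContinuousLinearMap.map_smul]; rfl
    have h2 : f y₀ ≤ N xf := by
      rw [hf_eq]
      calc ∑ j, y₀ j * xf j = ∑ j, xf j * y₀ j :=
            Finset.sum_congr rfl fun j _ => mul_comm _ _
        _ ≤ N xf := hdual_le y₀ hy₀ xf
    obtain ⟨i, hi⟩ := hmax xf
    obtain ⟨w, hwM, hwv⟩ := hach ((A i)ᵀ *ᵥ xf)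
    have h3 : A i *ᵥ w ∈ convexHull ℝ (⋃ i, (fun x => A i *ᵥ x) '' M) :=
      subset_convexHull ℝ _ (Set.mem_iUnion.2 ⟨i, ⟨w, hwM, rfl⟩⟩)
    have h4 := hfC _ h3
    have h5 : f (A i *ᵥ w) = ρ * N xf := by
      rw [hf_eq]
      calc ∑ j, (A i *ᵥ w) j * xf j = ∑ j, xf j * (A i *ᵥ w) j :=
            Finset.sum_congr rfl fun j _ => mul_comm _ _
        _ = ∑ j, ((A i)ᵀ *ᵥ xf) j * w j := hswap _ _ _
        _ = N ((A i)ᵀ *ᵥ xf) := hwv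
        _ = ρ * N xf := hi
    rw [h1] at hfz
    have h6 : ρ * f y₀ ≤ ρ * N xf := mul_le_mul_of_nonneg_left h2 hρ.le
    linarith
  · -- conv hull ⊆ ρ • M
    refine convexHull_min (Set.iUnion_subset fun i => ?_) (hconv.smul ρ)
    rintro _ ⟨y, hy, rfl⟩
    refine Set.mem_smul_set.2 ⟨ρ⁻¹ • (A i *ᵥ y), ?_, ?_⟩
    · intro x hx
      have he : ∑ j, x j * (ρ⁻¹ • (A i *ᵥ y)) j = ρ⁻¹ * ∑ j, ((A i)ᵀ *ᵥ x) j * y j := by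
        rw [← hswap, Finset.mul_sum]
        exact Finset.sum_congr rfl fun j _ => by
          simp only [Pi.smul_apply, smul_eq_mul]; ring
      rw [he, abs_mul, abs_of_pos (inv_pos.2 hρ)]
      have hb := hdual_abs y hy ((A i)ᵀ *ᵥ x)
      have hub2 : N ((A i)ᵀ *ᵥ x) ≤ ρ := by
        have h7 := hub x i
        have h8 : ρ * N x ≤ ρ * 1 := mul_le_mul_of_nonneg_left hx hρ.le
        linarith
      calc ρ⁻¹ * |∑ j, ((A i)ᵀ *ᵥ x) j * y j| ≤ ρ⁻¹ * ρ :=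
            mul_le_mul_of_nonneg_left (hb.trans hub2) (inv_pos.2 hρ).le
        _ = 1 := inv_mul_cancel₀ hρ.ne'
    · rw [smul_smul, mul_inv_cancel₀ hρ.ne', one_smul]
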